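/- arXiv:1904.00235 — 4 statements merged into one kernel-verified Lean document; each statement's English description precedes it below -/
import Mathlib

section
/- Let h, k : ℝ → ℝ be differentiable functions and let π be the associated skew-symmetric 5×5 matrix field on ℝ⁵ described in the context. Then π satisfies the Jacobi identity: for all indices i, j, l ∈ {0,1,2,3,4} and all p ∈ ℝ⁵, Σ_{r=0}^{4} ( π_{ir}(p)·∂π_{jl}/∂p_r(p) + π_{jr}(p)·∂π_{li}/∂p_r(p) + π_{lr}(p)·∂π_{ij}/∂p_r(p) ) = 0. Consequently the bracket {f,g}(p) = Σ_{i,j=0}^{4} π_{ij}(p)·(∂f/∂p_i)(p)·(∂g/∂p_j)(p) on differentiable functions on ℝ⁵ is a Poisson bracket. -/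
open scoped BigOperators

/-- The skew-symmetric 5×5 matrix field on ℝ⁵ (coordinates `p 0, …, p 4`) with entries
`π₀₁ = 4p₂`, `π₀₂ = 2p₀ − 2h(p₁)p₃p₄`, `π₀₃ = 2h(p₁)p₂p₄`, `π₀₄ = 2k(p₁)p₂p₃`,
`π₁₂ = −2p₁`, `π₁₃ = 0`, `π₁₄ = 0`, `π₂₃ = h(p₁)p₁p₄`, `π₂₄ = k(p₁)p₁p₃`, `π₃₄ = 0`. -/
noncomputable def piM (h k : ℝ → ℝ) (p : Fin 5 → ℝ) : Matrix (Fin 5) (Fin 5) ℝ :=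
  !![0, 4 * p 2, 2 * p 0 - 2 * h (p 1) * p 3 * p 4, 2 * h (p 1) * p 2 * p 4,
       2 * k (p 1) * p 2 * p 3;
     -(4 * p 2), 0, -(2 * p 1), 0, 0;
     -(2 * p 0 - 2 * h (p 1) * p 3 * p 4), 2 * p 1, 0, h (p 1) * p 1 * p 4,
       k (p 1) * p 1 * p 3;
     -(2 * h (p 1) * p 2 * p 4), 0, -(h (p 1) * p 1 * p 4), 0, 0;
     -(2 * k (p 1) * p 2 * p 3), 0, -(k (p 1) * p 1 * p 3), 0, 0]

lemma keyA (g : ℝ → ℝ) (hg : Differentiable ℝ g) (a b : Fin 5) (p v : Fin 5 → ℝ) :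
    fderiv ℝ (fun q : Fin 5 → ℝ => g (q 1) * q a * q b) p v
      = deriv g (p 1) * v 1 * p a * p b + g (p 1) * v a * p b + g (p 1) * p a * v b := by
  have H1 : HasFDerivAt (fun q : Fin 5 → ℝ => g (q 1))
      ((deriv g (p 1)) • (ContinuousLinearMap.proj 1 : (Fin 5 → ℝ) →L[ℝ] ℝ)) p :=
    ((hg (p 1)).hasDerivAt).comp_hasFDerivAt p (hasFDerivAt_apply (𝕜 := ℝ) 1 p)
  have H := (H1.fun_mul (hasFDerivAt_apply (𝕜 := ℝ) a p)).fun_mul (hasFDerivAt_apply (𝕜 := ℝ) b p)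
  rw [H.fderiv]; simp; ring

lemma keyB (c : ℝ) (g : ℝ → ℝ) (hg : Differentiable ℝ g) (a b : Fin 5) (p v : Fin 5 → ℝ) :
    fderiv ℝ (fun q : Fin 5 → ℝ => c * g (q 1) * q a * q b) p v
      = c * deriv g (p 1) * v 1 * p a * p b + c * g (p 1) * v a * p b
        + c * g (p 1) * p a * v b := by
  have H1 : HasFDerivAt (fun q : Fin 5 → ℝ => c * g (q 1))
      ((c * deriv g (p 1)) • (ContinuousLinearMap.proj 1 : (Fin 5 → ℝ) →L[ℝ] ℝ)) p := by
    have := (((hg (p 1)).hasDerivAt).const_mul c).comp_hasFDerivAt p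
      (hasFDerivAt_apply (𝕜 := ℝ) 1 p)
    exact this
  have H := (H1.fun_mul (hasFDerivAt_apply (𝕜 := ℝ) a p)).fun_mul (hasFDerivAt_apply (𝕜 := ℝ) b p)
  rw [H.fderiv]; simp; ring

lemma fin0 : (⟨0, by omega⟩ : Fin 5) = 0 := rfl
lemma fin1 : (⟨1, by omega⟩ : Fin 5) = 1 := rfl
lemma fin2 : (⟨2, by omega⟩ : Fin 5) = 2 := rfl
lemma fin3 : (⟨3, by omega⟩ : Fin 5) = 3 := rfl
lemma fin4 : (⟨4, by omega⟩ : Fin 5) = 4 := rfl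

lemma sing (a b : Fin 5) : (Pi.single a (1:ℝ) : Fin 5 → ℝ) b = if b = a then 1 else 0 := by
  rcases eq_or_ne b a with rfl | hba
  · simp
  · simp [hba]

lemma P00 (h k : ℝ → ℝ) (p : Fin 5 → ℝ) : piM h k p 0 0 = 0 := rfl
lemma P01 (h k : ℝ → ℝ) (p : Fin 5 → ℝ) : piM h k p 0 1 = 4 * p 2 := rfl
lemma P02 (h k : ℝ → ℝ) (p : Fin 5 → ℝ) : piM h k p 0 2 = 2 * p 0 - 2 * h (p 1) * p 3 * p 4 := rfl
lemma P03 (h k : ℝ → ℝ) (p : Fin 5 → ℝ) : piM h k p 0 3 = 2 * h (p 1) * p 2 * p 4 := rfl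
lemma P04 (h k : ℝ → ℝ) (p : Fin 5 → ℝ) : piM h k p 0 4 = 2 * k (p 1) * p 2 * p 3 := rfl
lemma P10 (h k : ℝ → ℝ) (p : Fin 5 → ℝ) : piM h k p 1 0 = -(4 * p 2) := rfl
lemma P11 (h k : ℝ → ℝ) (p : Fin 5 → ℝ) : piM h k p 1 1 = 0 := rfl
lemma P12 (h k : ℝ → ℝ) (p : Fin 5 → ℝ) : piM h k p 1 2 = -(2 * p 1) := rfl
lemma P13 (h k : ℝ → ℝ) (p : Fin 5 → ℝ) : piM h k p 1 3 = 0 := rfl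
lemma P14 (h k : ℝ → ℝ) (p : Fin 5 → ℝ) : piM h k p 1 4 = 0 := rfl
lemma P20 (h k : ℝ → ℝ) (p : Fin 5 → ℝ) : piM h k p 2 0 = -(2 * p 0 - 2 * h (p 1) * p 3 * p 4) := rfl
lemma P21 (h k : ℝ → ℝ) (p : Fin 5 → ℝ) : piM h k p 2 1 = 2 * p 1 := rfl
lemma P22 (h k : ℝ → ℝ) (p : Fin 5 → ℝ) : piM h k p 2 2 = 0 := rfl
lemma P23 (h k : ℝ → ℝ) (p : Fin 5 → ℝ) : piM h k p 2 3 = h (p 1) * p 1 * p 4 := rfl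
lemma P24 (h k : ℝ → ℝ) (p : Fin 5 → ℝ) : piM h k p 2 4 = k (p 1) * p 1 * p 3 := rfl
lemma P30 (h k : ℝ → ℝ) (p : Fin 5 → ℝ) : piM h k p 3 0 = -(2 * h (p 1) * p 2 * p 4) := rfl
lemma P31 (h k : ℝ → ℝ) (p : Fin 5 → ℝ) : piM h k p 3 1 = 0 := rfl
lemma P32 (h k : ℝ → ℝ) (p : Fin 5 → ℝ) : piM h k p 3 2 = -(h (p 1) * p 1 * p 4) := rfl
lemma P33 (h k : ℝ → ℝ) (p : Fin 5 → ℝ) : piM h k p 3 3 = 0 := rfl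
lemma P34 (h k : ℝ → ℝ) (p : Fin 5 → ℝ) : piM h k p 3 4 = 0 := rfl
lemma P40 (h k : ℝ → ℝ) (p : Fin 5 → ℝ) : piM h k p 4 0 = -(2 * k (p 1) * p 2 * p 3) := rfl
lemma P41 (h k : ℝ → ℝ) (p : Fin 5 → ℝ) : piM h k p 4 1 = 0 := rfl
lemma P42 (h k : ℝ → ℝ) (p : Fin 5 → ℝ) : piM h k p 4 2 = -(k (p 1) * p 1 * p 3) := rfl
lemma P43 (h k : ℝ → ℝ) (p : Fin 5 → ℝ) : piM h k p 4 3 = 0 := rfl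
lemma P44 (h k : ℝ → ℝ) (p : Fin 5 → ℝ) : piM h k p 4 4 = 0 := rfl

variable {h k : ℝ → ℝ}

section FD
variable (hh : Differentiable ℝ h) (hk : Differentiable ℝ k) (p v : Fin 5 → ℝ)

lemma D00 : fderiv ℝ (fun q : Fin 5 → ℝ => piM h k q 0 0) p v = 0 := by
  rw [show (fun q : Fin 5 → ℝ => piM h k q 0 0) = (fun _ : Fin 5 → ℝ => (0:ℝ)) from rfl]
  simp
include hh hk in
lemma D01 : fderiv ℝ (fun q : Fin 5 → ℝ => piM h k q 0 1) p v = 4 * v 2 :=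
  by
  have H := ((hasFDerivAt_apply (𝕜 := ℝ) 2 p).const_mul (4:ℝ))
  rw [show (fun q : Fin 5 → ℝ => piM h k q 0 1) = (fun q : Fin 5 → ℝ => 4 * q 2) from rfl,
    H.fderiv]
  simp
include hh hk in
lemma D02 : fderiv ℝ (fun q : Fin 5 → ℝ => piM h k q 0 2) p v = 2 * v 0 - (2 * deriv h (p 1) * v 1 * p 3 * p 4 + 2 * h (p 1) * v 3 * p 4 + 2 * h (p 1) * p 3 * v 4) :=
  by
  rw [show (fun q : Fin 5 → ℝ => piM h k q 0 2)
      = (fun q : Fin 5 → ℝ => 2 * q 0 - 2 * h (q 1) * q 3 * q 4) from rfl]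
  rw [fderiv_fun_sub (by fun_prop) (by fun_prop)]
  have HA := ((hasFDerivAt_apply (𝕜 := ℝ) 0 p).const_mul (2:ℝ)).fderiv
  have HB := keyB 2 h hh 3 4 p v
  simp only [ContinuousLinearMap.sub_apply, HA, HB]
  simp
  try ring
include hh hk in
lemma D03 : fderiv ℝ (fun q : Fin 5 → ℝ => piM h k q 0 3) p v = 2 * deriv h (p 1) * v 1 * p 2 * p 4 + 2 * h (p 1) * v 2 * p 4 + 2 * h (p 1) * p 2 * v 4 :=
  keyB 2 h hh 2 4 p v
include hh hk in
lemma D04 : fderiv ℝ (fun q : Fin 5 → ℝ => piM h k q 0 4) p v = 2 * deriv k (p 1) * v 1 * p 2 * p 3 + 2 * k (p 1) * v 2 * p 3 + 2 * k (p 1) * p 2 * v 3 :=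
  keyB 2 k hk 2 3 p v
include hh hk in
lemma D10 : fderiv ℝ (fun q : Fin 5 → ℝ => piM h k q 1 0) p v = -(4 * v 2) := by
  rw [show (fun q : Fin 5 → ℝ => piM h k q 1 0)
      = (fun q : Fin 5 → ℝ => -(piM h k q 0 1)) from rfl, fderiv_fun_neg]
  rw [ContinuousLinearMap.neg_apply, D01 hh hk p v]
lemma D11 : fderiv ℝ (fun q : Fin 5 → ℝ => piM h k q 1 1) p v = 0 := by
  rw [show (fun q : Fin 5 → ℝ => piM h k q 1 1) = (fun _ : Fin 5 → ℝ => (0:ℝ)) from rfl]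
  simp
include hh hk in
lemma D12 : fderiv ℝ (fun q : Fin 5 → ℝ => piM h k q 1 2) p v = -(2 * v 1) :=
  by
  have H := ((hasFDerivAt_apply (𝕜 := ℝ) 1 p).const_mul (2:ℝ)).fun_neg
  rw [show (fun q : Fin 5 → ℝ => piM h k q 1 2) = (fun q : Fin 5 → ℝ => -(2 * q 1)) from rfl,
    H.fderiv]
  simp
lemma D13 : fderiv ℝ (fun q : Fin 5 → ℝ => piM h k q 1 3) p v = 0 := by
  rw [show (fun q : Fin 5 → ℝ => piM h k q 1 3) = (fun _ : Fin 5 → ℝ => (0:ℝ)) from rfl]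
  simp
lemma D14 : fderiv ℝ (fun q : Fin 5 → ℝ => piM h k q 1 4) p v = 0 := by
  rw [show (fun q : Fin 5 → ℝ => piM h k q 1 4) = (fun _ : Fin 5 → ℝ => (0:ℝ)) from rfl]
  simp
include hh hk in
lemma D20 : fderiv ℝ (fun q : Fin 5 → ℝ => piM h k q 2 0) p v = -(2 * v 0 - (2 * deriv h (p 1) * v 1 * p 3 * p 4 + 2 * h (p 1) * v 3 * p 4 + 2 * h (p 1) * p 3 * v 4)) := by
  rw [show (fun q : Fin 5 → ℝ => piM h k q 2 0)
      = (fun q : Fin 5 → ℝ => -(piM h k q 0 2)) from rfl, fderiv_fun_neg]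
  rw [ContinuousLinearMap.neg_apply, D02 hh hk p v]
include hh hk in
lemma D21 : fderiv ℝ (fun q : Fin 5 → ℝ => piM h k q 2 1) p v = -(-(2 * v 1)) := by
  have H := ((hasFDerivAt_apply (𝕜 := ℝ) 1 p).const_mul (2:ℝ))
  rw [show (fun q : Fin 5 → ℝ => piM h k q 2 1) = (fun q : Fin 5 → ℝ => 2 * q 1) from rfl,
    H.fderiv]
  simp
lemma D22 : fderiv ℝ (fun q : Fin 5 → ℝ => piM h k q 2 2) p v = 0 := by
  rw [show (fun q : Fin 5 → ℝ => piM h k q 2 2) = (fun _ : Fin 5 → ℝ => (0:ℝ)) from rfl]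
  simp
include hh hk in
lemma D23 : fderiv ℝ (fun q : Fin 5 → ℝ => piM h k q 2 3) p v = deriv h (p 1) * v 1 * p 1 * p 4 + h (p 1) * v 1 * p 4 + h (p 1) * p 1 * v 4 :=
  keyA h hh 1 4 p v
include hh hk in
lemma D24 : fderiv ℝ (fun q : Fin 5 → ℝ => piM h k q 2 4) p v = deriv k (p 1) * v 1 * p 1 * p 3 + k (p 1) * v 1 * p 3 + k (p 1) * p 1 * v 3 :=
  keyA k hk 1 3 p v
include hh hk in
lemma D30 : fderiv ℝ (fun q : Fin 5 → ℝ => piM h k q 3 0) p v = -(2 * deriv h (p 1) * v 1 * p 2 * p 4 + 2 * h (p 1) * v 2 * p 4 + 2 * h (p 1) * p 2 * v 4) := by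
  rw [show (fun q : Fin 5 → ℝ => piM h k q 3 0)
      = (fun q : Fin 5 → ℝ => -(piM h k q 0 3)) from rfl, fderiv_fun_neg]
  rw [ContinuousLinearMap.neg_apply, D03 hh hk p v]
lemma D31 : fderiv ℝ (fun q : Fin 5 → ℝ => piM h k q 3 1) p v = 0 := by
  rw [show (fun q : Fin 5 → ℝ => piM h k q 3 1) = (fun _ : Fin 5 → ℝ => (0:ℝ)) from rfl]
  simp
include hh hk in
lemma D32 : fderiv ℝ (fun q : Fin 5 → ℝ => piM h k q 3 2) p v = -(deriv h (p 1) * v 1 * p 1 * p 4 + h (p 1) * v 1 * p 4 + h (p 1) * p 1 * v 4) := by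
  rw [show (fun q : Fin 5 → ℝ => piM h k q 3 2)
      = (fun q : Fin 5 → ℝ => -(piM h k q 2 3)) from rfl, fderiv_fun_neg]
  rw [ContinuousLinearMap.neg_apply, D23 hh hk p v]
lemma D33 : fderiv ℝ (fun q : Fin 5 → ℝ => piM h k q 3 3) p v = 0 := by
  rw [show (fun q : Fin 5 → ℝ => piM h k q 3 3) = (fun _ : Fin 5 → ℝ => (0:ℝ)) from rfl]
  simp
lemma D34 : fderiv ℝ (fun q : Fin 5 → ℝ => piM h k q 3 4) p v = 0 := by
  rw [show (fun q : Fin 5 → ℝ => piM h k q 3 4) = (fun _ : Fin 5 → ℝ => (0:ℝ)) from rfl]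
  simp
include hh hk in
lemma D40 : fderiv ℝ (fun q : Fin 5 → ℝ => piM h k q 4 0) p v = -(2 * deriv k (p 1) * v 1 * p 2 * p 3 + 2 * k (p 1) * v 2 * p 3 + 2 * k (p 1) * p 2 * v 3) := by
  rw [show (fun q : Fin 5 → ℝ => piM h k q 4 0)
      = (fun q : Fin 5 → ℝ => -(piM h k q 0 4)) from rfl, fderiv_fun_neg]
  rw [ContinuousLinearMap.neg_apply, D04 hh hk p v]
lemma D41 : fderiv ℝ (fun q : Fin 5 → ℝ => piM h k q 4 1) p v = 0 := by
  rw [show (fun q : Fin 5 → ℝ => piM h k q 4 1) = (fun _ : Fin 5 → ℝ => (0:ℝ)) from rfl]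
  simp
include hh hk in
lemma D42 : fderiv ℝ (fun q : Fin 5 → ℝ => piM h k q 4 2) p v = -(deriv k (p 1) * v 1 * p 1 * p 3 + k (p 1) * v 1 * p 3 + k (p 1) * p 1 * v 3) := by
  rw [show (fun q : Fin 5 → ℝ => piM h k q 4 2)
      = (fun q : Fin 5 → ℝ => -(piM h k q 2 4)) from rfl, fderiv_fun_neg]
  rw [ContinuousLinearMap.neg_apply, D24 hh hk p v]
lemma D43 : fderiv ℝ (fun q : Fin 5 → ℝ => piM h k q 4 3) p v = 0 := by
  rw [show (fun q : Fin 5 → ℝ => piM h k q 4 3) = (fun _ : Fin 5 → ℝ => (0:ℝ)) from rfl]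
  simp
lemma D44 : fderiv ℝ (fun q : Fin 5 → ℝ => piM h k q 4 4) p v = 0 := by
  rw [show (fun q : Fin 5 → ℝ => piM h k q 4 4) = (fun _ : Fin 5 → ℝ => (0:ℝ)) from rfl]
  simp

end FD

noncomputable def Df (h k : ℝ → ℝ) (p v : Fin 5 → ℝ) : Matrix (Fin 5) (Fin 5) ℝ :=
  !![(0), (4 * v 2), (2 * v 0 - (2 * deriv h (p 1) * v 1 * p 3 * p 4 + 2 * h (p 1) * v 3 * p 4 + 2 * h (p 1) * p 3 * v 4)), (2 * deriv h (p 1) * v 1 * p 2 * p 4 + 2 * h (p 1) * v 2 * p 4 + 2 * h (p 1) * p 2 * v 4), (2 * deriv k (p 1) * v 1 * p 2 * p 3 + 2 * k (p 1) * v 2 * p 3 + 2 * k (p 1) * p 2 * v 3);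
     (-(4 * v 2)), (0), (-(2 * v 1)), (0), (0);
     (-(2 * v 0 - (2 * deriv h (p 1) * v 1 * p 3 * p 4 + 2 * h (p 1) * v 3 * p 4 + 2 * h (p 1) * p 3 * v 4))), (-(-(2 * v 1))), (0), (deriv h (p 1) * v 1 * p 1 * p 4 + h (p 1) * v 1 * p 4 + h (p 1) * p 1 * v 4), (deriv k (p 1) * v 1 * p 1 * p 3 + k (p 1) * v 1 * p 3 + k (p 1) * p 1 * v 3);
     (-(2 * deriv h (p 1) * v 1 * p 2 * p 4 + 2 * h (p 1) * v 2 * p 4 + 2 * h (p 1) * p 2 * v 4)), (0), (-(deriv h (p 1) * v 1 * p 1 * p 4 + h (p 1) * v 1 * p 4 + h (p 1) * p 1 * v 4)), (0), (0);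
     (-(2 * deriv k (p 1) * v 1 * p 2 * p 3 + 2 * k (p 1) * v 2 * p 3 + 2 * k (p 1) * p 2 * v 3)), (0), (-(deriv k (p 1) * v 1 * p 1 * p 3 + k (p 1) * v 1 * p 3 + k (p 1) * p 1 * v 3)), (0), (0)]

lemma Q00 (h k : ℝ → ℝ) (p v : Fin 5 → ℝ) : Df h k p v 0 0 = 0 := rfl
lemma Q01 (h k : ℝ → ℝ) (p v : Fin 5 → ℝ) : Df h k p v 0 1 = 4 * v 2 := rfl
lemma Q02 (h k : ℝ → ℝ) (p v : Fin 5 → ℝ) : Df h k p v 0 2 = 2 * v 0 - (2 * deriv h (p 1) * v 1 * p 3 * p 4 + 2 * h (p 1) * v 3 * p 4 + 2 * h (p 1) * p 3 * v 4) := rfl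
lemma Q03 (h k : ℝ → ℝ) (p v : Fin 5 → ℝ) : Df h k p v 0 3 = 2 * deriv h (p 1) * v 1 * p 2 * p 4 + 2 * h (p 1) * v 2 * p 4 + 2 * h (p 1) * p 2 * v 4 := rfl
lemma Q04 (h k : ℝ → ℝ) (p v : Fin 5 → ℝ) : Df h k p v 0 4 = 2 * deriv k (p 1) * v 1 * p 2 * p 3 + 2 * k (p 1) * v 2 * p 3 + 2 * k (p 1) * p 2 * v 3 := rfl
lemma Q10 (h k : ℝ → ℝ) (p v : Fin 5 → ℝ) : Df h k p v 1 0 = -(4 * v 2) := rfl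
lemma Q11 (h k : ℝ → ℝ) (p v : Fin 5 → ℝ) : Df h k p v 1 1 = 0 := rfl
lemma Q12 (h k : ℝ → ℝ) (p v : Fin 5 → ℝ) : Df h k p v 1 2 = -(2 * v 1) := rfl
lemma Q13 (h k : ℝ → ℝ) (p v : Fin 5 → ℝ) : Df h k p v 1 3 = 0 := rfl
lemma Q14 (h k : ℝ → ℝ) (p v : Fin 5 → ℝ) : Df h k p v 1 4 = 0 := rfl
lemma Q20 (h k : ℝ → ℝ) (p v : Fin 5 → ℝ) : Df h k p v 2 0 = -(2 * v 0 - (2 * deriv h (p 1) * v 1 * p 3 * p 4 + 2 * h (p 1) * v 3 * p 4 + 2 * h (p 1) * p 3 * v 4)) := rfl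
lemma Q21 (h k : ℝ → ℝ) (p v : Fin 5 → ℝ) : Df h k p v 2 1 = -(-(2 * v 1)) := rfl
lemma Q22 (h k : ℝ → ℝ) (p v : Fin 5 → ℝ) : Df h k p v 2 2 = 0 := rfl
lemma Q23 (h k : ℝ → ℝ) (p v : Fin 5 → ℝ) : Df h k p v 2 3 = deriv h (p 1) * v 1 * p 1 * p 4 + h (p 1) * v 1 * p 4 + h (p 1) * p 1 * v 4 := rfl
lemma Q24 (h k : ℝ → ℝ) (p v : Fin 5 → ℝ) : Df h k p v 2 4 = deriv k (p 1) * v 1 * p 1 * p 3 + k (p 1) * v 1 * p 3 + k (p 1) * p 1 * v 3 := rfl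
lemma Q30 (h k : ℝ → ℝ) (p v : Fin 5 → ℝ) : Df h k p v 3 0 = -(2 * deriv h (p 1) * v 1 * p 2 * p 4 + 2 * h (p 1) * v 2 * p 4 + 2 * h (p 1) * p 2 * v 4) := rfl
lemma Q31 (h k : ℝ → ℝ) (p v : Fin 5 → ℝ) : Df h k p v 3 1 = 0 := rfl
lemma Q32 (h k : ℝ → ℝ) (p v : Fin 5 → ℝ) : Df h k p v 3 2 = -(deriv h (p 1) * v 1 * p 1 * p 4 + h (p 1) * v 1 * p 4 + h (p 1) * p 1 * v 4) := rfl
lemma Q33 (h k : ℝ → ℝ) (p v : Fin 5 → ℝ) : Df h k p v 3 3 = 0 := rfl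
lemma Q34 (h k : ℝ → ℝ) (p v : Fin 5 → ℝ) : Df h k p v 3 4 = 0 := rfl
lemma Q40 (h k : ℝ → ℝ) (p v : Fin 5 → ℝ) : Df h k p v 4 0 = -(2 * deriv k (p 1) * v 1 * p 2 * p 3 + 2 * k (p 1) * v 2 * p 3 + 2 * k (p 1) * p 2 * v 3) := rfl
lemma Q41 (h k : ℝ → ℝ) (p v : Fin 5 → ℝ) : Df h k p v 4 1 = 0 := rfl
lemma Q42 (h k : ℝ → ℝ) (p v : Fin 5 → ℝ) : Df h k p v 4 2 = -(deriv k (p 1) * v 1 * p 1 * p 3 + k (p 1) * v 1 * p 3 + k (p 1) * p 1 * v 3) := rfl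
lemma Q43 (h k : ℝ → ℝ) (p v : Fin 5 → ℝ) : Df h k p v 4 3 = 0 := rfl
lemma Q44 (h k : ℝ → ℝ) (p v : Fin 5 → ℝ) : Df h k p v 4 4 = 0 := rfl

lemma Dall {h k : ℝ → ℝ} (hh : Differentiable ℝ h) (hk : Differentiable ℝ k)
    (p v : Fin 5 → ℝ) (a b : Fin 5) :
    fderiv ℝ (fun q : Fin 5 → ℝ => piM h k q a b) p v = Df h k p v a b := by
  fin_cases a <;> fin_cases b
  · exact D00 (h:=h) (k:=k) p v
  · exact D01 hh hk p v
  · exact D02 hh hk p v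
  · exact D03 hh hk p v
  · exact D04 hh hk p v
  · exact D10 hh hk p v
  · exact D11 (h:=h) (k:=k) p v
  · exact D12 hh hk p v
  · exact D13 (h:=h) (k:=k) p v
  · exact D14 (h:=h) (k:=k) p v
  · exact D20 hh hk p v
  · exact D21 hh hk p v
  · exact D22 (h:=h) (k:=k) p v
  · exact D23 hh hk p v
  · exact D24 hh hk p v
  · exact D30 hh hk p v
  · exact D31 (h:=h) (k:=k) p v
  · exact D32 hh hk p v
  · exact D33 (h:=h) (k:=k) p v
  · exact D34 (h:=h) (k:=k) p v
  · exact D40 hh hk p v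
  · exact D41 (h:=h) (k:=k) p v
  · exact D42 hh hk p v
  · exact D43 (h:=h) (k:=k) p v
  · exact D44 (h:=h) (k:=k) p v

set_option maxHeartbeats 40000000 in
/-- The matrix field `piM h k` satisfies the Jacobi identity, i.e. the associated
bracket `{f,g}(p) = Σᵢⱼ πᵢⱼ(p) ∂f/∂pᵢ ∂g/∂pⱼ` is a Poisson bracket on ℝ⁵. -/
theorem piM_jacobi_identity (h k : ℝ → ℝ) (hh : Differentiable ℝ h)
    (hk : Differentiable ℝ k) (i j l : Fin 5) (p : Fin 5 → ℝ) :
    ∑ r : Fin 5,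
      (piM h k p i r * fderiv ℝ (fun q => piM h k q j l) p (Pi.single r 1)
        + piM h k p j r * fderiv ℝ (fun q => piM h k q l i) p (Pi.single r 1)
        + piM h k p l r * fderiv ℝ (fun q => piM h k q i j) p (Pi.single r 1)) = 0 := by
  simp only [Dall hh hk]
  fin_cases i <;> fin_cases j <;> fin_cases l <;>
    · simp only [fin0, fin1, fin2, fin3, fin4, Fin.sum_univ_five,
        P00, P01, P02, P03, P04, P10, P11, P12, P13, P14, P20, P21, P22, P23, P24, P30, P31, P32, P33, P34, P40, P41, P42, P43, P44,
        Q00, Q01, Q02, Q03, Q04, Q10, Q11, Q12, Q13, Q14, Q20, Q21, Q22, Q23, Q24, Q30, Q31, Q32, Q33, Q34, Q40, Q41, Q42, Q43, Q44,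
        sing, Fin.reduceEq, reduceIte, if_true, if_false]
      try norm_num
      try ring
end

section
/- Let h, k : ℝ → ℝ be differentiable and let π be the associated skew-symmetric 5×5 matrix field on ℝ⁵ described in the context. Suppose f, g : ℝ → ℝ are differentiable and satisfy f'(s) = −(1/2)·k(s)·g(s) and g'(s) = −(1/2)·h(s)·f(s) for all s ∈ ℝ. Then the function J(p) := f(p₁)·p₃ + g(p₁)·p₄ is a Casimir of π: for every i ∈ {0,1,2,3,4} and every p ∈ ℝ⁵, Σ_{j=0}^{4} π_{ij}(p)·(∂J/∂p_j)(p) = 0. -/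
open scoped BigOperators

lemma fderiv_J (f g : ℝ → ℝ) (hf : Differentiable ℝ f) (hg : Differentiable ℝ g)
    (p v : Fin 5 → ℝ) :
    fderiv ℝ (fun q : Fin 5 → ℝ => f (q 1) * q 3 + g (q 1) * q 4) p v
      = deriv f (p 1) * v 1 * p 3 + f (p 1) * v 3
        + (deriv g (p 1) * v 1 * p 4 + g (p 1) * v 4) := by
  have h1 : HasFDerivAt (fun q : Fin 5 → ℝ => q 1)
      (ContinuousLinearMap.proj 1 : (Fin 5 → ℝ) →L[ℝ] ℝ) p :=
    hasFDerivAt_apply 1 p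
  have h3 : HasFDerivAt (fun q : Fin 5 → ℝ => q 3)
      (ContinuousLinearMap.proj 3 : (Fin 5 → ℝ) →L[ℝ] ℝ) p :=
    hasFDerivAt_apply 3 p
  have h4 : HasFDerivAt (fun q : Fin 5 → ℝ => q 4)
      (ContinuousLinearMap.proj 4 : (Fin 5 → ℝ) →L[ℝ] ℝ) p :=
    hasFDerivAt_apply 4 p
  have hfc : HasFDerivAt (fun q : Fin 5 → ℝ => f (q 1))
      (deriv f (p 1) • (ContinuousLinearMap.proj 1 : (Fin 5 → ℝ) →L[ℝ] ℝ)) p :=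
    ((hf (p 1)).hasDerivAt).comp_hasFDerivAt p h1
  have hgc : HasFDerivAt (fun q : Fin 5 → ℝ => g (q 1))
      (deriv g (p 1) • (ContinuousLinearMap.proj 1 : (Fin 5 → ℝ) →L[ℝ] ℝ)) p :=
    ((hg (p 1)).hasDerivAt).comp_hasFDerivAt p h1
  have H : fderiv ℝ (fun q : Fin 5 → ℝ => f (q 1) * q 3 + g (q 1) * q 4) p = _ :=
    ((hfc.mul h3).add (hgc.mul h4)).fderiv
  rw [H]
  simp [ContinuousLinearMap.proj]
  ring

/-- If `f' = −(1/2)·k·g` and `g' = −(1/2)·h·f`, then `J(p) = f(p₁)p₃ + g(p₁)p₄`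
is a Casimir of the matrix field `piM h k`. -/
theorem casimir_of_piM (h k f g : ℝ → ℝ) (hh : Differentiable ℝ h)
    (hk : Differentiable ℝ k) (hf : Differentiable ℝ f) (hg : Differentiable ℝ g)
    (hf' : ∀ s : ℝ, deriv f s = -(1 / 2) * k s * g s)
    (hg' : ∀ s : ℝ, deriv g s = -(1 / 2) * h s * f s)
    (i : Fin 5) (p : Fin 5 → ℝ) :
    ∑ j : Fin 5,
      piM h k p i j *
        fderiv ℝ (fun q : Fin 5 → ℝ => f (q 1) * q 3 + g (q 1) * q 4) p (Pi.single j 1)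
      = 0 := by
  rw [Fin.sum_univ_five]
  simp only [fderiv_J f g hf hg, hf', hg']
  fin_cases i <;>
    simp [piM, Matrix.vecHead, Matrix.vecTail, Pi.single_apply] <;> ring
end

section
/- Let h, k : ℝ → ℝ be differentiable and let π be the associated skew-symmetric 5×5 matrix field on ℝ⁵ described in the context. Then the function C(p) := p₀p₁ − p₂² − p₃² is a Casimir of π: for every i ∈ {0,1,2,3,4} and every p ∈ ℝ⁵, Σ_{j=0}^{4} π_{ij}(p)·(∂C/∂p_j)(p) = 0. -/
open scoped BigOperators

lemma fderivC (p : Fin 5 → ℝ) (v : Fin 5 → ℝ) :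
    fderiv ℝ (fun q : Fin 5 → ℝ => q 0 * q 1 - (q 2) ^ 2 - (q 3) ^ 2) p v
      = p 1 * v 0 + p 0 * v 1 - 2 * p 2 * v 2 - 2 * p 3 * v 3 := by
  have h0 := hasFDerivAt_apply (𝕜 := ℝ) (0 : Fin 5) p
  have h1 := hasFDerivAt_apply (𝕜 := ℝ) (1 : Fin 5) p
  have h2 := hasFDerivAt_apply (𝕜 := ℝ) (2 : Fin 5) p
  have h3 := hasFDerivAt_apply (𝕜 := ℝ) (3 : Fin 5) p
  have H := ((h0.mul h1).sub (h2.mul h2)).sub (h3.mul h3)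
  have e : (fun q : Fin 5 → ℝ => q 0 * q 1 - (q 2) ^ 2 - (q 3) ^ 2)
      = fun q : Fin 5 → ℝ => q 0 * q 1 - q 2 * q 2 - q 3 * q 3 := by
    funext q; ring
  rw [e, (show HasFDerivAt (fun q : Fin 5 → ℝ => q 0 * q 1 - q 2 * q 2 - q 3 * q 3) _ p from H).fderiv]
  simp [ContinuousLinearMap.proj]
  ring


/-- The function `C(p) = p₀p₁ − p₂² − p₃²` is a Casimir of the matrix field `piM h k`. -/
theorem casimir_C_of_piM (h k : ℝ → ℝ) (hh : Differentiable ℝ h)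
    (hk : Differentiable ℝ k) (i : Fin 5) (p : Fin 5 → ℝ) :
    ∑ j : Fin 5,
      piM h k p i j *
        fderiv ℝ (fun q : Fin 5 → ℝ => q 0 * q 1 - (q 2) ^ 2 - (q 3) ^ 2) p (Pi.single j 1)
      = 0 := by
  simp only [Fin.sum_univ_five, fderivC, Pi.single_apply]
  fin_cases i <;> simp [piM, Matrix.vecHead, Matrix.vecTail] <;> ring
end

section
/- Let S² = { γ ∈ ℝ³ : γ₁² + γ₂² + γ₃² = 1 }. The image of the map T : S² × ℝ³ → ℝ⁵ defined by T(γ, M) = ( γ₃, γ₁M₂ − γ₂M₁, γ₁M₁ + γ₂M₂, M₃, M₁² + M₂² ) is exactly the set { (τ₁,τ₂,τ₃,τ₄,τ₅) ∈ ℝ⁵ : |τ₁| ≤ 1, τ₅ ≥ 0, τ₂² + τ₃² = (1 − τ₁²)·τ₅ }. -/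
/-- The image of the invariant map
`T(γ, M) = (γ₃, γ₁M₂ − γ₂M₁, γ₁M₁ + γ₂M₂, M₃, M₁² + M₂²)` on `S² × ℝ³` is exactly the
semi-algebraic set `{|τ₁| ≤ 1, τ₅ ≥ 0, τ₂² + τ₃² = (1 − τ₁²)τ₅}` in ℝ⁵. -/
theorem image_invariant_map_solid :
    {τ : Fin 5 → ℝ | ∃ γ M : Fin 3 → ℝ,
        γ 0 ^ 2 + γ 1 ^ 2 + γ 2 ^ 2 = 1 ∧
        τ = ![γ 2, γ 0 * M 1 - γ 1 * M 0, γ 0 * M 0 + γ 1 * M 1, M 2, M 0 ^ 2 + M 1 ^ 2]}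
    = {τ : Fin 5 → ℝ | |τ 0| ≤ 1 ∧ 0 ≤ τ 4
        ∧ (τ 1) ^ 2 + (τ 2) ^ 2 = (1 - (τ 0) ^ 2) * τ 4} := by
  ext τ
  simp only [Set.mem_setOf_eq]
  constructor
  · rintro ⟨γ, M, hγ, rfl⟩
    simp only [Matrix.cons_val_zero, Matrix.cons_val_one, Matrix.head_cons,
      Matrix.cons_val_two, Matrix.tail_cons, Matrix.cons_val_three, Matrix.cons_val_four]
    refine ⟨abs_le.2 ⟨?_, ?_⟩, by positivity, by nlinarith [sq_nonneg (γ 0), sq_nonneg (γ 1)]⟩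
    · nlinarith [sq_nonneg (γ 0), sq_nonneg (γ 1), sq_nonneg (γ 2 + 1)]
    · nlinarith [sq_nonneg (γ 0), sq_nonneg (γ 1), sq_nonneg (γ 2 - 1)]
  · rintro ⟨h1, h4, heq⟩
    rcases eq_or_lt_of_le h1 with habs | hlt
    · -- |τ 0| = 1
      have h02 : τ 0 ^ 2 = 1 := by rw [← sq_abs, habs]; norm_num
      have h10 : τ 1 = 0 := by nlinarith [sq_nonneg (τ 2)]
      have h20 : τ 2 = 0 := by nlinarith [sq_nonneg (τ 1)]
      refine ⟨![0, 0, τ 0], ![Real.sqrt (τ 4), 0, τ 3], ?_, ?_⟩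
      · show (0:ℝ) ^ 2 + 0 ^ 2 + τ 0 ^ 2 = 1
        simpa using h02
      · funext i
        fin_cases i
        · rfl
        · show τ 1 = 0 * 0 - 0 * Real.sqrt (τ 4)
          rw [h10]; ring
        · show τ 2 = 0 * Real.sqrt (τ 4) + 0 * 0
          rw [h20]; ring
        · rfl
        · show τ 4 = Real.sqrt (τ 4) ^ 2 + 0 ^ 2
          rw [Real.sq_sqrt h4]; ring
    · -- |τ 0| < 1
      have hr2 : (0:ℝ) < 1 - (τ 0) ^ 2 := by
        have := abs_lt.1 hlt
        nlinarith [this.1, this.2]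
      set r := Real.sqrt (1 - (τ 0) ^ 2) with hrdef
      have hr : 0 < r := Real.sqrt_pos.2 hr2
      have hrsq : r ^ 2 = 1 - (τ 0) ^ 2 := Real.sq_sqrt hr2.le
      refine ⟨![r, 0, τ 0], ![τ 2 / r, τ 1 / r, τ 3], ?_, ?_⟩
      · show r ^ 2 + 0 ^ 2 + τ 0 ^ 2 = 1
        rw [hrsq]; ring
      · funext i
        fin_cases i
        · rfl
        · show τ 1 = r * (τ 1 / r) - 0 * (τ 2 / r)
          field_simp
          ring
        · show τ 2 = r * (τ 2 / r) + 0 * (τ 1 / r)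
          field_simp
          ring
        · rfl
        · show τ 4 = (τ 2 / r) ^ 2 + (τ 1 / r) ^ 2
          field_simp
          nlinarith
end
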